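/- (Hilbert series of the weighted G₂ hypersurface flag variety, highest weight λ₁ = ω₁.) In the fraction field K = Frac(ℚ[x,y,q]) the following identity holds: ∑ over the 12 triples (ε, (p,q), (r,s)) listed below of ε · x^p y^q / (1 − q·x^r y^s) equals (1 − q²)·D / ((1 − q)·∏_{(c,d)} (1 − q·x^c y^d)), where D = x⁵y³ − x⁴y³ − x⁵y² + xy² + x⁴y − x^{−1}y − xy^{−1} + x^{−4}y^{−1} + x^{−1}y^{−2} − x^{−5}y^{−2} − x^{−4}y^{−3} + x^{−5}y^{−3} and the product is over the six short roots (c,d) ∈ {(2,1),(1,1),(1,0),(−1,0),(−1,−1),(−2,−1)}. The 12 triples (ε, wρ, wω₁) are: (+,(5,3),(2,1)), (−,(4,3),(1,1)), (−,(5,2),(2,1)), (+,(1,2),(1,1)), (+,(4,1),(1,0)), (−,(−1,1),(−1,0)), (−,(1,−1),(1,0)), (+,(−4,−1),(−1,0)), (+,(−1,−2),(−1,−1)), (−,(−5,−2),(−2,−1)), (−,(−4,−3),(−1,−1)), (+,(−5,−3),(−2,−1)). Specializing x = t^a, y = t^b, q = t^u, this says that the Hilbert series of the weighted G₂ flag variety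 for the 7-dimensional representation V_{ω₁} is P_{wΣ}(t) = (1−t^{2u})/((1−t^u)·∏_{α∈∇_s}(1 − t^{⟨α,μ⟩+u})). -/
import Mathlib


open MvPolynomial

/-- The fraction field `K = Frac(ℚ[x,y,q])`. -/
abbrev G2Field : Type := FractionRing (MvPolynomial (Fin 3) ℚ)

/-- The element `x` of `Frac(ℚ[x,y,q])`. -/
noncomputable def G2x : G2Field := algebraMap (MvPolynomial (Fin 3) ℚ) G2Field (X 0)
/-- The element `y` of `Frac(ℚ[x,y,q])`. -/
noncomputable def G2y : G2Field := algebraMap (MvPolynomial (Fin 3) ℚ) G2Field (X 1)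
/-- The element `q` of `Frac(ℚ[x,y,q])`. -/
noncomputable def G2q : G2Field := algebraMap (MvPolynomial (Fin 3) ℚ) G2Field (X 2)

/-- The monomial `x^p y^q` (with integer exponents) in `Frac(ℚ[x,y,q])`. -/
noncomputable def G2m (p q : ℤ) : G2Field := G2x ^ p * G2y ^ q

/-- The Weyl numerator `D = ∑_{w∈W} (−1)^w x^{wρ}` for `G₂`. -/
noncomputable def G2D : G2Field :=
  G2m 5 3 - G2m 4 3 - G2m 5 2 + G2m 1 2 + G2m 4 1 - G2m (-1) 1 - G2m 1 (-1)
    + G2m (-4) (-1) + G2m (-1) (-2) - G2m (-5) (-2) - G2m (-4) (-3) + G2m (-5) (-3)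

set_option maxHeartbeats 1000000 in
/-- The reduced (Laurent-polynomial-cleared) form of the `G₂` Hilbert series identity,
in an arbitrary field. -/
lemma G2aux2 {K : Type} [Field K] (x y q : K)
    (h1 : 1 - q * (x ^ 2 * y) ≠ 0) (h2 : 1 - q * (x * y) ≠ 0) (h3 : 1 - q * x ≠ 0)
    (h4 : x - q ≠ 0) (h5 : x * y - q ≠ 0) (h6 : x ^ 2 * y - q ≠ 0) :
    (x ^ 10 * y ^ 6 - x ^ 10 * y ^ 5) / (1 - q * (x ^ 2 * y))
      + (x ^ 6 * y ^ 5 - x ^ 9 * y ^ 6) / (1 - q * (x * y))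
      + (x ^ 9 * y ^ 4 - x ^ 6 * y ^ 2) / (1 - q * x)
      + (x ^ 2 * y ^ 2 - x ^ 5 * y ^ 4) / (x - q)
      + (x ^ 5 * y ^ 2 - x ^ 2 * y) / (x * y - q)
      + (x ^ 2 * y - x ^ 2 * y ^ 2) / (x ^ 2 * y - q)
    = (1 + q) *
        (x ^ 14 * y ^ 8 - x ^ 13 * y ^ 8 - x ^ 14 * y ^ 7 + x ^ 10 * y ^ 7 + x ^ 13 * y ^ 6
          - x ^ 8 * y ^ 6 - x ^ 10 * y ^ 4 + x ^ 5 * y ^ 4 + x ^ 8 * y ^ 3 - x ^ 4 * y ^ 3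
          - x ^ 5 * y ^ 2 + x ^ 4 * y ^ 2) /
        ((1 - q * (x ^ 2 * y)) * (1 - q * (x * y)) * (1 - q * x)
          * (x - q) * (x * y - q) * (x ^ 2 * y - q)) := by
  rw [div_add_div _ _ h1 h2, div_add_div _ _ (mul_ne_zero h1 h2) h3,
    div_add_div _ _ (mul_ne_zero (mul_ne_zero h1 h2) h3) h4,
    div_add_div _ _ (mul_ne_zero (mul_ne_zero (mul_ne_zero h1 h2) h3) h4) h5,
    div_add_div _ _ (mul_ne_zero (mul_ne_zero (mul_ne_zero (mul_ne_zero h1 h2) h3) h4) h5) h6,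
    div_eq_div_iff (by exact mul_ne_zero (mul_ne_zero (mul_ne_zero (mul_ne_zero (mul_ne_zero h1 h2) h3) h4) h5) h6)
      (by exact mul_ne_zero (mul_ne_zero (mul_ne_zero (mul_ne_zero (mul_ne_zero h1 h2) h3) h4) h5) h6)]
  ring

set_option maxHeartbeats 2000000 in
/-- The full `G₂` Hilbert series identity, in an arbitrary field. -/
lemma G2auxfull {K : Type} [Field K] (x y q : K) (hx : x ≠ 0) (hy : y ≠ 0)
    (h1 : 1 - q * (x ^ 2 * y) ≠ 0) (h2 : 1 - q * (x * y) ≠ 0) (h3 : 1 - q * x ≠ 0)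
    (h4 : x - q ≠ 0) (h5 : x * y - q ≠ 0) (h6 : x ^ 2 * y - q ≠ 0) (hq : 1 - q ≠ 0) :
    x ^ 5 * y ^ 3 / (1 - q * (x ^ 2 * y))
      - x ^ 4 * y ^ 3 / (1 - q * (x * y))
      - x ^ 5 * y ^ 2 / (1 - q * (x ^ 2 * y))
      + x * y ^ 2 / (1 - q * (x * y))
      + x ^ 4 * y / (1 - q * x)
      - x⁻¹ * y / (1 - q * x⁻¹)
      - x * y⁻¹ / (1 - q * x)
      + (x ^ 4)⁻¹ * y⁻¹ / (1 - q * x⁻¹)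
      + x⁻¹ * (y ^ 2)⁻¹ / (1 - q * (x⁻¹ * y⁻¹))
      - (x ^ 5)⁻¹ * (y ^ 2)⁻¹ / (1 - q * ((x ^ 2)⁻¹ * y⁻¹))
      - (x ^ 4)⁻¹ * (y ^ 3)⁻¹ / (1 - q * (x⁻¹ * y⁻¹))
      + (x ^ 5)⁻¹ * (y ^ 3)⁻¹ / (1 - q * ((x ^ 2)⁻¹ * y⁻¹))
    = (1 - q ^ 2) *
        (x ^ 5 * y ^ 3 - x ^ 4 * y ^ 3 - x ^ 5 * y ^ 2 + x * y ^ 2 + x ^ 4 * y - x⁻¹ * y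
          - x * y⁻¹ + (x ^ 4)⁻¹ * y⁻¹ + x⁻¹ * (y ^ 2)⁻¹ - (x ^ 5)⁻¹ * (y ^ 2)⁻¹
          - (x ^ 4)⁻¹ * (y ^ 3)⁻¹ + (x ^ 5)⁻¹ * (y ^ 3)⁻¹) /
        ((1 - q) *
          ((1 - q * (x ^ 2 * y)) * (1 - q * (x * y)) * (1 - q * x)
            * (1 - q * x⁻¹) * (1 - q * (x⁻¹ * y⁻¹)) * (1 - q * ((x ^ 2)⁻¹ * y⁻¹)))) := by
  have hx2 : (x:K) ^ 2 ≠ 0 := pow_ne_zero _ hx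
  have E4 : (1:K) - q * x⁻¹ = (x - q) * x⁻¹ := by
    rw [sub_mul, mul_inv_cancel₀ hx]
  have E5 : (1:K) - q * (x⁻¹ * y⁻¹) = (x * y - q) * (x⁻¹ * y⁻¹) := by
    rw [sub_mul, ← mul_inv, mul_inv_cancel₀ (mul_ne_zero hx hy)]
  have E6 : (1:K) - q * ((x ^ 2)⁻¹ * y⁻¹) = (x ^ 2 * y - q) * ((x ^ 2)⁻¹ * y⁻¹) := by
    rw [sub_mul, ← mul_inv, mul_inv_cancel₀ (mul_ne_zero hx2 hy)]
  have A1 : x ^ 5 * y ^ 3 / (1 - q * (x ^ 2 * y))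
      = (x ^ 5 * y ^ 3)⁻¹ * (x ^ 10 * y ^ 6 / (1 - q * (x ^ 2 * y))) := by
    field_simp; try ring
  have A2 : x ^ 4 * y ^ 3 / (1 - q * (x * y))
      = (x ^ 5 * y ^ 3)⁻¹ * (x ^ 9 * y ^ 6 / (1 - q * (x * y))) := by
    field_simp; try ring
  have A3 : x ^ 5 * y ^ 2 / (1 - q * (x ^ 2 * y))
      = (x ^ 5 * y ^ 3)⁻¹ * (x ^ 10 * y ^ 5 / (1 - q * (x ^ 2 * y))) := by
    field_simp; try ring
  have A4 : x * y ^ 2 / (1 - q * (x * y))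
      = (x ^ 5 * y ^ 3)⁻¹ * (x ^ 6 * y ^ 5 / (1 - q * (x * y))) := by
    field_simp; try ring
  have A5 : x ^ 4 * y / (1 - q * x)
      = (x ^ 5 * y ^ 3)⁻¹ * (x ^ 9 * y ^ 4 / (1 - q * x)) := by
    field_simp; try ring
  have A6 : x⁻¹ * y / (1 - q * x⁻¹)
      = (x ^ 5 * y ^ 3)⁻¹ * (x ^ 5 * y ^ 4 / (x - q)) := by
    rw [E4]; field_simp; try ring
  have A7 : x * y⁻¹ / (1 - q * x)
      = (x ^ 5 * y ^ 3)⁻¹ * (x ^ 6 * y ^ 2 / (1 - q * x)) := by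
    field_simp; try ring
  have A8 : (x ^ 4)⁻¹ * y⁻¹ / (1 - q * x⁻¹)
      = (x ^ 5 * y ^ 3)⁻¹ * (x ^ 2 * y ^ 2 / (x - q)) := by
    rw [E4]; field_simp; try ring
  have A9 : x⁻¹ * (y ^ 2)⁻¹ / (1 - q * (x⁻¹ * y⁻¹))
      = (x ^ 5 * y ^ 3)⁻¹ * (x ^ 5 * y ^ 2 / (x * y - q)) := by
    rw [E5]; field_simp; try ring
  have A10 : (x ^ 5)⁻¹ * (y ^ 2)⁻¹ / (1 - q * ((x ^ 2)⁻¹ * y⁻¹))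
      = (x ^ 5 * y ^ 3)⁻¹ * (x ^ 2 * y ^ 2 / (x ^ 2 * y - q)) := by
    rw [E6]; field_simp; try ring
  have A11 : (x ^ 4)⁻¹ * (y ^ 3)⁻¹ / (1 - q * (x⁻¹ * y⁻¹))
      = (x ^ 5 * y ^ 3)⁻¹ * (x ^ 2 * y / (x * y - q)) := by
    rw [E5]; field_simp; try ring
  have A12 : (x ^ 5)⁻¹ * (y ^ 3)⁻¹ / (1 - q * ((x ^ 2)⁻¹ * y⁻¹))
      = (x ^ 5 * y ^ 3)⁻¹ * (x ^ 2 * y / (x ^ 2 * y - q)) := by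
    rw [E6]; field_simp; try ring
  have AD : x ^ 5 * y ^ 3 - x ^ 4 * y ^ 3 - x ^ 5 * y ^ 2 + x * y ^ 2 + x ^ 4 * y - x⁻¹ * y
          - x * y⁻¹ + (x ^ 4)⁻¹ * y⁻¹ + x⁻¹ * (y ^ 2)⁻¹ - (x ^ 5)⁻¹ * (y ^ 2)⁻¹
          - (x ^ 4)⁻¹ * (y ^ 3)⁻¹ + (x ^ 5)⁻¹ * (y ^ 3)⁻¹
      = (x ^ 9 * y ^ 5)⁻¹ *
        (x ^ 14 * y ^ 8 - x ^ 13 * y ^ 8 - x ^ 14 * y ^ 7 + x ^ 10 * y ^ 7 + x ^ 13 * y ^ 6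
          - x ^ 8 * y ^ 6 - x ^ 10 * y ^ 4 + x ^ 5 * y ^ 4 + x ^ 8 * y ^ 3 - x ^ 4 * y ^ 3
          - x ^ 5 * y ^ 2 + x ^ 4 * y ^ 2) := by
    have B1 : x⁻¹ * y = (x ^ 9 * y ^ 5)⁻¹ * (x ^ 8 * y ^ 6) := by field_simp; try ring
    have B2 : x * y⁻¹ = (x ^ 9 * y ^ 5)⁻¹ * (x ^ 10 * y ^ 4) := by field_simp; try ring
    have B3 : (x ^ 4)⁻¹ * y⁻¹ = (x ^ 9 * y ^ 5)⁻¹ * (x ^ 5 * y ^ 4) := by field_simp; try ring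
    have B4 : x⁻¹ * (y ^ 2)⁻¹ = (x ^ 9 * y ^ 5)⁻¹ * (x ^ 8 * y ^ 3) := by field_simp; try ring
    have B5 : (x ^ 5)⁻¹ * (y ^ 2)⁻¹ = (x ^ 9 * y ^ 5)⁻¹ * (x ^ 4 * y ^ 3) := by field_simp; try ring
    have B6 : (x ^ 4)⁻¹ * (y ^ 3)⁻¹ = (x ^ 9 * y ^ 5)⁻¹ * (x ^ 5 * y ^ 2) := by field_simp; try ring
    have B7 : (x ^ 5)⁻¹ * (y ^ 3)⁻¹ = (x ^ 9 * y ^ 5)⁻¹ * (x ^ 4 * y ^ 2) := by field_simp; try ring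
    have B8 : x ^ 5 * y ^ 3 = (x ^ 9 * y ^ 5)⁻¹ * (x ^ 14 * y ^ 8) := by field_simp; try ring
    have B9 : x ^ 4 * y ^ 3 = (x ^ 9 * y ^ 5)⁻¹ * (x ^ 13 * y ^ 8) := by field_simp; try ring
    have B10 : x ^ 5 * y ^ 2 = (x ^ 9 * y ^ 5)⁻¹ * (x ^ 14 * y ^ 7) := by field_simp; try ring
    have B11 : x * y ^ 2 = (x ^ 9 * y ^ 5)⁻¹ * (x ^ 10 * y ^ 7) := by field_simp; try ring
    have B12 : x ^ 4 * y = (x ^ 9 * y ^ 5)⁻¹ * (x ^ 13 * y ^ 6) := by field_simp; try ring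
    linear_combination B8 - B9 - B10 + B11 + B12 - B1 - B2 + B3 + B4 - B5 - B6 + B7
  have C1 : (x ^ 9 * y ^ 5)⁻¹
      = (x ^ 5 * y ^ 3)⁻¹ * (x⁻¹ * (x⁻¹ * y⁻¹) * ((x ^ 2)⁻¹ * y⁻¹)) := by
    simp only [← mul_inv]
    exact congrArg Inv.inv (by ring)
  have A13 : (1 - q ^ 2) *
        (x ^ 5 * y ^ 3 - x ^ 4 * y ^ 3 - x ^ 5 * y ^ 2 + x * y ^ 2 + x ^ 4 * y - x⁻¹ * y
          - x * y⁻¹ + (x ^ 4)⁻¹ * y⁻¹ + x⁻¹ * (y ^ 2)⁻¹ - (x ^ 5)⁻¹ * (y ^ 2)⁻¹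
          - (x ^ 4)⁻¹ * (y ^ 3)⁻¹ + (x ^ 5)⁻¹ * (y ^ 3)⁻¹) /
        ((1 - q) *
          ((1 - q * (x ^ 2 * y)) * (1 - q * (x * y)) * (1 - q * x)
            * (1 - q * x⁻¹) * (1 - q * (x⁻¹ * y⁻¹)) * (1 - q * ((x ^ 2)⁻¹ * y⁻¹))))
      = (x ^ 5 * y ^ 3)⁻¹ * ((1 + q) *
        (x ^ 14 * y ^ 8 - x ^ 13 * y ^ 8 - x ^ 14 * y ^ 7 + x ^ 10 * y ^ 7 + x ^ 13 * y ^ 6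
          - x ^ 8 * y ^ 6 - x ^ 10 * y ^ 4 + x ^ 5 * y ^ 4 + x ^ 8 * y ^ 3 - x ^ 4 * y ^ 3
          - x ^ 5 * y ^ 2 + x ^ 4 * y ^ 2) /
        ((1 - q * (x ^ 2 * y)) * (1 - q * (x * y)) * (1 - q * x)
          * (x - q) * (x * y - q) * (x ^ 2 * y - q))) := by
    rw [AD, E4, E5, E6, ← mul_div_assoc,
      div_eq_div_iff
        (mul_ne_zero hq (mul_ne_zero (mul_ne_zero (mul_ne_zero (mul_ne_zero (mul_ne_zero h1 h2) h3)
          (mul_ne_zero h4 (inv_ne_zero hx)))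
          (mul_ne_zero h5 (mul_ne_zero (inv_ne_zero hx) (inv_ne_zero hy))))
          (mul_ne_zero h6 (mul_ne_zero (inv_ne_zero hx2) (inv_ne_zero hy)))))
        (mul_ne_zero (mul_ne_zero (mul_ne_zero (mul_ne_zero (mul_ne_zero h1 h2) h3) h4) h5) h6)]
    linear_combination ((1 - q ^ 2) *
        (x ^ 14 * y ^ 8 - x ^ 13 * y ^ 8 - x ^ 14 * y ^ 7 + x ^ 10 * y ^ 7 + x ^ 13 * y ^ 6
          - x ^ 8 * y ^ 6 - x ^ 10 * y ^ 4 + x ^ 5 * y ^ 4 + x ^ 8 * y ^ 3 - x ^ 4 * y ^ 3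
          - x ^ 5 * y ^ 2 + x ^ 4 * y ^ 2) *
        ((1 - q * (x ^ 2 * y)) * (1 - q * (x * y)) * (1 - q * x)
          * (x - q) * (x * y - q) * (x ^ 2 * y - q))) * C1
  rw [A1, A2, A3, A4, A5, A6, A7, A8, A9, A10, A11, A12, A13]
  linear_combination (x ^ 5 * y ^ 3)⁻¹ * (G2aux2 x y q h1 h2 h3 h4 h5 h6)

lemma G2_poly_ne (p p' : MvPolynomial (Fin 3) ℚ)
    (h : eval (fun i => if i = 2 then 0 else 1) p ≠ eval (fun i => if i = 2 then 0 else 1) p') :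
    algebraMap (MvPolynomial (Fin 3) ℚ) G2Field p ≠ algebraMap (MvPolynomial (Fin 3) ℚ) G2Field p' :=
  fun hh => h (congrArg _ (IsFractionRing.injective (MvPolynomial (Fin 3) ℚ) G2Field hh))

lemma G2x_ne : G2x ≠ 0 :=
  (map_ne_zero_iff _ (IsFractionRing.injective (MvPolynomial (Fin 3) ℚ) G2Field)).mpr (X_ne_zero 0)

lemma G2y_ne : G2y ≠ 0 :=
  (map_ne_zero_iff _ (IsFractionRing.injective (MvPolynomial (Fin 3) ℚ) G2Field)).mpr (X_ne_zero 1)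

/-- **Hilbert series of the weighted `G₂` hypersurface flag variety** (highest weight
`λ₁ = ω₁`).  In `K = Frac(ℚ[x,y,q])`:
`∑_{w∈W} (−1)^w x^{wρ} / (1 − q x^{wω₁})
  = (1 − q²) D / ((1 − q) ∏_{α short} (1 − q x^α))`.
Specializing `x = tᵃ, y = tᵇ, q = tᵘ` this is
`P_{wΣ}(t) = (1 − t^{2u}) / ((1 − t^u) ∏_{α∈∇_s} (1 − t^{⟨α,μ⟩+u}))`. -/
theorem hilbert_series_weighted_G2_hypersurface :
    G2m 5 3 / (1 - G2q * G2m 2 1)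
      - G2m 4 3 / (1 - G2q * G2m 1 1)
      - G2m 5 2 / (1 - G2q * G2m 2 1)
      + G2m 1 2 / (1 - G2q * G2m 1 1)
      + G2m 4 1 / (1 - G2q * G2m 1 0)
      - G2m (-1) 1 / (1 - G2q * G2m (-1) 0)
      - G2m 1 (-1) / (1 - G2q * G2m 1 0)
      + G2m (-4) (-1) / (1 - G2q * G2m (-1) 0)
      + G2m (-1) (-2) / (1 - G2q * G2m (-1) (-1))
      - G2m (-5) (-2) / (1 - G2q * G2m (-2) (-1))
      - G2m (-4) (-3) / (1 - G2q * G2m (-1) (-1))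
      + G2m (-5) (-3) / (1 - G2q * G2m (-2) (-1))
    = (1 - G2q ^ 2) * G2D /
        ((1 - G2q) *
          ((1 - G2q * G2m 2 1) * (1 - G2q * G2m 1 1) * (1 - G2q * G2m 1 0)
            * (1 - G2q * G2m (-1) 0) * (1 - G2q * G2m (-1) (-1))
            * (1 - G2q * G2m (-2) (-1)))) := by
  have hx : G2x ≠ 0 := G2x_ne
  have hy : G2y ≠ 0 := G2y_ne
  have key : ∀ a b : ℕ, G2q * (G2x ^ a * G2y ^ b) ≠ 1 := by
    intro a b
    simp only [G2x, G2y, G2q, ← map_pow, ← map_mul]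
    rw [show (1 : G2Field) = algebraMap (MvPolynomial (Fin 3) ℚ) G2Field 1 from (map_one _).symm]
    exact G2_poly_ne _ _ (by simp)
  have key2 : ∀ a b : ℕ, G2x ^ a * G2y ^ b - G2q ≠ 0 := by
    intro a b
    rw [sub_ne_zero]
    simp only [G2x, G2y, G2q, ← map_pow, ← map_mul]
    refine G2_poly_ne _ _ ?_
    simp
  have h1 : (1 : G2Field) - G2q * (G2x ^ 2 * G2y) ≠ 0 := by
    rw [sub_ne_zero]
    simpa using (key 2 1).symm
  have h2 : (1 : G2Field) - G2q * (G2x * G2y) ≠ 0 := by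
    rw [sub_ne_zero]
    simpa using (key 1 1).symm
  have h3 : (1 : G2Field) - G2q * G2x ≠ 0 := by
    rw [sub_ne_zero]
    simpa using (key 1 0).symm
  have h4 : G2x - G2q ≠ 0 := by simpa using key2 1 0
  have h5 : G2x * G2y - G2q ≠ 0 := by simpa using key2 1 1
  have h6 : G2x ^ 2 * G2y - G2q ≠ 0 := by simpa using key2 2 1
  have hq : (1 : G2Field) - G2q ≠ 0 := by
    rw [sub_ne_zero]
    simpa using (key 0 0).symm
  have := G2auxfull G2x G2y G2q hx hy h1 h2 h3 h4 h5 h6 hq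
  simp only [G2m, G2D, zpow_neg, zpow_ofNat, zpow_one, zpow_zero, pow_zero, pow_one, mul_one]
  convert this using 2
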